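/- With n = m·r, m = n^{1/(2p)}, group-based matching of 2n points in [0,B_1]×...×[0,B_p] ⊂ ℝ^p (sorted and grouped coordinatewise as in the suboptimal matching algorithm) yields, for each coordinate j, ∑_{matched pairs} (x_{i,j} - x_{i',j})^2 ≤ r B_j^2, and hence (1/n) ∑_{j=1}^p ∑_{pairs} (x_{i,j} - x_{i',j})^2 ≤ (1/m) ∑_{j=1}^p B_j^2 = n^{-1/(2p)} ∑_{j=1}^p B_j^2, which tends to 0 as n → ∞. -/

import Mathlib

open Filter Finset

theorem stmt_16 (p m r n : ℕ) (hp : 0 < p) (hn : n = m * r) (hr : 0 < r)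
    (hm : (m : ℝ) = (n : ℝ) ^ ((1 : ℝ) / (2 * (p : ℝ))))
    (B : Fin p → ℝ) (x : Fin (2 * n) → Fin p → ℝ)
    (hx : ∀ i j, x i j ∈ Set.Icc 0 (B j))
    (G : Fin (2 * n) → Fin m)
    (hcard : ∀ g, (Finset.univ.filter (fun i => G i = g)).card = 2 * r)
    (d : Fin m → Fin p → ℝ) (hd : ∀ g j, 0 ≤ d g j)
    (hdB : ∀ j, ∑ g, d g j ≤ B j)
    (hsame : ∀ i i' j, G i = G i' → |x i j - x i' j| ≤ d (G i) j)
    (π : Fin n → Fin (2 * n) × Fin (2 * n))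
    (hgroup : ∀ k, G (π k).1 = G (π k).2)
    (hbij : Function.Bijective
      (fun z : Fin n × Bool => if z.2 then (π z.1).1 else (π z.1).2)) :
    (∀ j, ∑ k, (x (π k).1 j - x (π k).2 j) ^ 2 ≤ r * (B j) ^ 2)
    ∧ (1 / (n : ℝ)) * ∑ j, ∑ k, (x (π k).1 j - x (π k).2 j) ^ 2 ≤ (1 / (m : ℝ)) * ∑ j, (B j) ^ 2
    ∧ (1 / (m : ℝ)) * ∑ j, (B j) ^ 2 = (n : ℝ) ^ (-(1 : ℝ) / (2 * (p : ℝ))) * ∑ j, (B j) ^ 2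
    ∧ Tendsto (fun N : ℕ => (N : ℝ) ^ (-(1 : ℝ) / (2 * (p : ℝ))) * ∑ j, (B j) ^ 2)
        atTop (nhds 0) := by
  have hBnn : ∀ j, 0 ≤ B j := fun j =>
    le_trans (Finset.sum_nonneg fun g _ => hd g j) (hdB j)
  have hBsqnn : 0 ≤ ∑ j, (B j) ^ 2 := Finset.sum_nonneg fun j _ => sq_nonneg _
  -- counting: each group contributes exactly r pairs
  set f : Fin n × Bool → Fin (2 * n) := fun z => if z.2 then (π z.1).1 else (π z.1).2 with hf
  have key : ∀ g, (Finset.univ.filter (fun k : Fin n => G (π k).1 = g)).card = r := by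
    intro g
    let e := Equiv.ofBijective f hbij
    have h1 : (Finset.univ.filter (fun z : Fin n × Bool => G (e z) = g)).card
        = (Finset.univ.filter (fun i => G i = g)).card := by
      apply Finset.card_bij (fun z _ => e z)
      · intro z hz; simp only [Finset.mem_filter, Finset.mem_univ, true_and] at hz ⊢; exact hz
      · intro a ha b hb hab; exact e.injective hab
      · intro i hi
        refine ⟨e.symm i, ?_, by simp⟩
        simp only [Finset.mem_filter, Finset.mem_univ, true_and] at hi ⊢
        simpa using hi
    have h2 : (Finset.univ.filter (fun z : Fin n × Bool => G (e z) = g))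
        = (Finset.univ.filter (fun k : Fin n => G (π k).1 = g)) ×ˢ Finset.univ := by
      ext ⟨k, b⟩
      simp only [Finset.mem_filter, Finset.mem_univ, true_and, Finset.mem_product, and_true]
      have : e (k, b) = f (k, b) := rfl
      rw [this]
      cases b
      · simp only [hf]
        simp only [if_neg (by simp : ¬(false = true))]
        rw [← hgroup k]
      · simp [hf]
    rw [h2, Finset.card_product, Finset.card_univ, Fintype.card_bool] at h1
    rw [hcard g] at h1
    omega
  have hmain : ∀ j, ∑ k, (x (π k).1 j - x (π k).2 j) ^ 2 ≤ r * (B j) ^ 2 := by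
    intro j
    calc ∑ k, (x (π k).1 j - x (π k).2 j) ^ 2
        = ∑ g, ∑ k ∈ Finset.univ.filter (fun k => G (π k).1 = g),
            (x (π k).1 j - x (π k).2 j) ^ 2 :=
          (Finset.sum_fiberwise _ _ _).symm
      _ ≤ ∑ g, ∑ k ∈ Finset.univ.filter (fun k => G (π k).1 = g), (d g j) ^ 2 := by
          apply Finset.sum_le_sum
          intro g _
          apply Finset.sum_le_sum
          intro k hk
          simp only [Finset.mem_filter] at hk
          have h := hsame (π k).1 (π k).2 j (hgroup k)
          rw [hk.2] at h
          calc (x (π k).1 j - x (π k).2 j) ^ 2 = |x (π k).1 j - x (π k).2 j| ^ 2 :=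
                (sq_abs _).symm
            _ ≤ (d g j) ^ 2 := pow_le_pow_left₀ (abs_nonneg _) h 2
      _ = ∑ g, (r : ℝ) * (d g j) ^ 2 := by
          apply Finset.sum_congr rfl
          intro g _
          rw [Finset.sum_const, key g, nsmul_eq_mul]
      _ = (r : ℝ) * ∑ g, (d g j) ^ 2 := by rw [Finset.mul_sum]
      _ ≤ (r : ℝ) * (∑ g, d g j) ^ 2 := by
          apply mul_le_mul_of_nonneg_left _ (Nat.cast_nonneg r)
          exact Finset.sum_sq_le_sq_sum_of_nonneg fun g _ => hd g j
      _ ≤ (r : ℝ) * (B j) ^ 2 := by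
          apply mul_le_mul_of_nonneg_left _ (Nat.cast_nonneg r)
          exact pow_le_pow_left₀ (Finset.sum_nonneg fun g _ => hd g j) (hdB j) 2
  refine ⟨hmain, ?_, ?_, ?_⟩
  · rcases Nat.eq_zero_or_pos n with hn0 | hn0
    · have hm0 : m = 0 := by
        rcases Nat.mul_eq_zero.mp (hn.symm.trans hn0) with h | h
        · exact h
        · exact absurd h hr.ne'
      subst hn0
      simp [hm0, hBsqnn]
    · have hmr : 0 < m * r := hn ▸ hn0
      have hm0 : 0 < m := Nat.pos_of_ne_zero fun h => by
        rw [h, Nat.zero_mul] at hmr; exact lt_irrefl 0 hmr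
      have h1 : ∑ j, ∑ k, (x (π k).1 j - x (π k).2 j) ^ 2 ≤ (r : ℝ) * ∑ j, (B j) ^ 2 := by
        rw [Finset.mul_sum]
        exact Finset.sum_le_sum fun j _ => hmain j
      have hnpos : (0:ℝ) < n := by exact_mod_cast hn0
      have : (1 / (n : ℝ)) * ∑ j, ∑ k, (x (π k).1 j - x (π k).2 j) ^ 2
          ≤ (1 / (n : ℝ)) * ((r : ℝ) * ∑ j, (B j) ^ 2) :=
        mul_le_mul_of_nonneg_left h1 (by positivity)
      refine this.trans_eq ?_
      have hnr : (n : ℝ) = (m : ℝ) * (r : ℝ) := by exact_mod_cast hn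
      rw [hnr]
      field_simp
  · rcases Nat.eq_zero_or_pos n with hn0 | hn0
    · have hm0 : m = 0 := by
        rcases Nat.mul_eq_zero.mp (hn.symm.trans hn0) with h | h
        · exact h
        · exact absurd h hr.ne' 
      have hexp : (-(1:ℝ)) / (2 * (p : ℝ)) ≠ 0 := by
        have : (0:ℝ) < (p : ℝ) := by exact_mod_cast hp
        intro h
        rw [div_eq_zero_iff] at h
        rcases h with h | h
        · norm_num at h
        · nlinarith
      rw [hm0, hn0]
      simp [Real.zero_rpow hexp]
    · have hnpos : (0:ℝ) < n := by exact_mod_cast hn0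
      have : (-(1:ℝ)) / (2 * (p : ℝ)) = -((1:ℝ) / (2 * (p : ℝ))) := by ring
      rw [this, Real.rpow_neg hnpos.le, hm, one_div]
  · have hc : (0:ℝ) < (1:ℝ) / (2 * (p : ℝ)) := by
      have : (0:ℝ) < (p : ℝ) := by exact_mod_cast hp
      positivity
    have h1 : Tendsto (fun N : ℕ => ((N : ℝ)) ^ (-(1:ℝ) / (2 * (p : ℝ)))) atTop (nhds 0) := by
      have h2 := (tendsto_rpow_neg_atTop hc).comp tendsto_natCast_atTop_atTop
      have he : (-(1:ℝ) / (2 * (p:ℝ))) = -((1:ℝ)/(2*(p:ℝ))) := by ring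
      simp only [he]
      exact h2
    have := h1.mul_const (∑ j, (B j) ^ 2)
    simpa using this
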